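/- For every n : ℕ, the number of restricted growth strings of length n equals the number of set partitions of an n-element set: Fintype.card {a : Fin n → ℕ // ∀ i, a i ≤ Finset.sup (Finset.Iio i) (fun j => a j + 1)} = Fintype.card (Finpartition (Finset.univ : Finset (Fin n))). (Here the sup over the empty set is 0, so the condition forces a 0 = 0 and a i ≤ 1 + max_{j < i} a j for i > 0.) -/

import Mathlib

/-- Every restricted growth string satisfies `a i ≤ i`. -/
theorem rgs_le (n : ℕ) (a : Fin n → ℕ)
    (ha : ∀ i, a i ≤ (Finset.Iio i).sup (fun j => a j + 1)) : ∀ i : Fin n, a i ≤ (i : ℕ) := by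
  suffices h : ∀ k : ℕ, ∀ i : Fin n, (i : ℕ) = k → a i ≤ (i : ℕ) from fun i => h i i rfl
  intro k
  induction k using Nat.strong_induction_on with
  | _ k ih =>
    intro i hik
    refine le_trans (ha i) (Finset.sup_le fun j hj => ?_)
    have hji : j < i := Finset.mem_Iio.mp hj
    have hji' : (j : ℕ) < (i : ℕ) := hji
    have := ih (j : ℕ) (by omega) j rfl
    omega

/-- The restricted growth strings of length `n` form a finite type. -/
noncomputable instance rgsFintype (n : ℕ) :
    Fintype {a : Fin n → ℕ // ∀ i, a i ≤ (Finset.Iio i).sup (fun j => a j + 1)} :=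
  Fintype.ofInjective
    (fun a i => (⟨a.1 i, lt_of_le_of_lt (rgs_le n a.1 a.2 i) i.isLt⟩ : Fin n))
    (fun _ _ h => Subtype.ext (funext fun i => congrArg Fin.val (congrFun h i)))

section Aux

variable {n : ℕ}

/-- helper: min' congruence -/
lemma min'_congr {α : Type*} [LinearOrder α] (s t : Finset α) (hs : s.Nonempty) (ht : t.Nonempty)
    (h : s = t) : s.min' hs = t.min' ht := by subst h; rfl

/-- every value below a value of an RGS is attained earlier -/
lemma rgs_attains (a : Fin n → ℕ)
    (ha : ∀ i, a i ≤ (Finset.Iio i).sup (fun j => a j + 1)) :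
    ∀ i : Fin n, ∀ v ≤ a i, ∃ j : Fin n, j ≤ i ∧ a j = v := by
  suffices h : ∀ k : ℕ, ∀ i : Fin n, (i : ℕ) = k → ∀ v ≤ a i, ∃ j : Fin n, j ≤ i ∧ a j = v from
    fun i => h i i rfl
  intro k
  induction k using Nat.strong_induction_on with
  | _ k ih =>
    intro i hik v hv
    rcases eq_or_lt_of_le hv with h | h
    · exact ⟨i, le_refl i, h.symm⟩
    · have hvs : v < (Finset.Iio i).sup (fun j => a j + 1) := lt_of_lt_of_le h (ha i)
      obtain ⟨j, hj, hvj⟩ := Finset.lt_sup_iff.mp hvs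
      have hji : j < i := Finset.mem_Iio.mp hj
      obtain ⟨j', hj', hj'v⟩ := ih (j : ℕ) (by omega) j rfl v (by omega)
      exact ⟨j', le_of_lt (lt_of_le_of_lt hj' hji), hj'v⟩

/-- RGS is determined by its fiber relation -/
lemma rgs_inj (a b : Fin n → ℕ)
    (ha : ∀ i, a i ≤ (Finset.Iio i).sup (fun j => a j + 1))
    (hb : ∀ i, b i ≤ (Finset.Iio i).sup (fun j => b j + 1))
    (hab : ∀ i j, a i = a j ↔ b i = b j) : a = b := by
  funext i
  suffices h : ∀ k : ℕ, ∀ i : Fin n, (i : ℕ) = k → a i = b i from h i i rfl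
  intro k
  induction k using Nat.strong_induction_on with
  | _ k ih =>
    intro i hik
    by_cases hrep : ∃ j : Fin n, j < i ∧ a j = a i
    · obtain ⟨j, hji, hj⟩ := hrep
      have h1 : b j = b i := (hab j i).mp hj
      have h2 : a j = b j := ih (j : ℕ) (by omega) j rfl
      omega
    · have hrepb : ¬ ∃ j : Fin n, j < i ∧ b j = b i := by
        rintro ⟨j, hji, hj⟩
        exact hrep ⟨j, hji, (hab j i).mpr hj⟩
      have hsup : ∀ (c : Fin n → ℕ), (∀ i, c i ≤ (Finset.Iio i).sup (fun j => c j + 1)) →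
          (¬ ∃ j : Fin n, j < i ∧ c j = c i) →
          c i = (Finset.Iio i).sup (fun j => c j + 1) := by
        intro c hc hno
        refine le_antisymm (hc i) ?_
        by_contra hlt
        push_neg at hlt
        obtain ⟨j, hj, hvj⟩ := Finset.lt_sup_iff.mp hlt
        have hji : j < i := Finset.mem_Iio.mp hj
        obtain ⟨j', hj', hj'v⟩ := rgs_attains c hc j (c i) (by omega)
        exact hno ⟨j', lt_of_le_of_lt hj' hji, hj'v⟩
      have hA := hsup a ha hrep
      have hB := hsup b hb hrepb
      rw [hA, hB]
      refine Finset.sup_congr rfl fun j hj => ?_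
      have hji : j < i := Finset.mem_Iio.mp hj
      rw [ih (j : ℕ) (by omega) j rfl]


section Aux2

variable {n : ℕ} (P : Finpartition (Finset.univ : Finset (Fin n)))

/-- the minimum of the part containing `i` -/
noncomputable def prep (i : Fin n) : Fin n :=
  (P.part i).min' ⟨i, P.mem_part (Finset.mem_univ i)⟩

lemma prep_mem (i : Fin n) : prep P i ∈ P.part i := Finset.min'_mem _ _

lemma prep_le (i : Fin n) : prep P i ≤ i :=
  Finset.min'_le _ _ (P.mem_part (Finset.mem_univ i))

lemma part_prep (i : Fin n) : P.part (prep P i) = P.part i :=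
  P.part_eq_of_mem (P.part_mem.mpr (Finset.mem_univ i)) (prep_mem P i)

lemma prep_congr {i j : Fin n} (h : P.part i = P.part j) : prep P i = prep P j :=
  min'_congr _ _ _ _ h

lemma prep_prep (i : Fin n) : prep P (prep P i) = prep P i :=
  prep_congr P (part_prep P i)

lemma prep_eq_iff {i j : Fin n} : prep P i = prep P j ↔ P.part i = P.part j := by
  constructor
  · intro h
    rw [← part_prep P i, h, part_prep P j]
  · exact prep_congr P

/-- the RGS value of `i`: the number of parts whose minimum is below the
minimum of the part of `i` -/
noncomputable def rgsOf (i : Fin n) : ℕ :=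
  ((Finset.Iio (prep P i)).image (prep P)).card

lemma prep_not_mem (i : Fin n) : prep P i ∉ (Finset.Iio (prep P i)).image (prep P) := by
  rintro hmem
  obtain ⟨m, hm, hmi⟩ := Finset.mem_image.mp hmem
  have hle : prep P m ≤ m := prep_le P m
  have : m < prep P i := Finset.mem_Iio.mp hm
  rw [hmi] at hle
  exact absurd (lt_of_le_of_lt hle this) (lt_irrefl _)

lemma rgsOf_strictMono {i j : Fin n} (h : prep P i < prep P j) : rgsOf P i < rgsOf P j := by
  apply Finset.card_lt_card
  constructor
  · apply Finset.image_subset_image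
    exact Finset.Iio_subset_Iio (le_of_lt h)
  · intro hsub
    apply prep_not_mem P i
    apply hsub
    exact Finset.mem_image.mpr ⟨prep P i, Finset.mem_Iio.mpr h, prep_prep P i⟩

lemma rgsOf_eq_iff {i j : Fin n} : rgsOf P i = rgsOf P j ↔ prep P i = prep P j := by
  constructor
  · intro h
    rcases lt_trichotomy (prep P i) (prep P j) with hlt | heq | hgt
    · exact absurd h (Nat.ne_of_lt (rgsOf_strictMono P hlt))
    · exact heq
    · exact absurd h.symm (Nat.ne_of_lt (rgsOf_strictMono P hgt))
  · intro h
    unfold rgsOf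
    rw [h]

lemma rgsOf_prep (i : Fin n) : rgsOf P (prep P i) = rgsOf P i := by
  unfold rgsOf
  rw [prep_prep]

lemma rgsOf_isRGS : ∀ i : Fin n, rgsOf P i ≤ (Finset.Iio i).sup (fun j => rgsOf P j + 1) := by
  intro i
  rcases lt_or_eq_of_le (prep_le P i) with hlt | heq
  · calc rgsOf P i = rgsOf P (prep P i) := (rgsOf_prep P i).symm
    _ ≤ rgsOf P (prep P i) + 1 := Nat.le_succ _
    _ ≤ _ := Finset.le_sup (f := fun j => rgsOf P j + 1) (Finset.mem_Iio.mpr hlt)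
  · -- i is the minimum of its own part
    rcases Finset.eq_empty_or_nonempty ((Finset.Iio i).image (prep P)) with hemp | hne
    · unfold rgsOf
      rw [heq, hemp]
      simp
    · set r := ((Finset.Iio i).image (prep P)).max' hne with hr
      have hrmem : r ∈ (Finset.Iio i).image (prep P) := Finset.max'_mem _ _
      obtain ⟨m, hm, hmr⟩ := Finset.mem_image.mp hrmem
      have hri : r < i := lt_of_le_of_lt (hmr ▸ prep_le P m) (Finset.mem_Iio.mp hm)
      have hrr : prep P r = r := by rw [← hmr, prep_prep]
      have hsub : (Finset.Iio i).image (prep P) ⊆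
          insert r ((Finset.Iio r).image (prep P)) := by
        intro x hx
        obtain ⟨m', hm', hmx⟩ := Finset.mem_image.mp hx
        have hxr : x ≤ r := Finset.le_max' _ _ hx
        rcases eq_or_lt_of_le hxr with h | h
        · exact Finset.mem_insert.mpr (Or.inl h)
        · refine Finset.mem_insert.mpr (Or.inr (Finset.mem_image.mpr ⟨x, Finset.mem_Iio.mpr h, ?_⟩))
          rw [← hmx, prep_prep]
      have hcard : rgsOf P i ≤ rgsOf P r + 1 := by
        unfold rgsOf
        rw [heq, hrr]
        calc ((Finset.Iio i).image (prep P)).card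
            ≤ (insert r ((Finset.Iio r).image (prep P))).card := Finset.card_le_card hsub
          _ ≤ ((Finset.Iio r).image (prep P)).card + 1 := Finset.card_insert_le _ _
      exact le_trans hcard (Finset.le_sup (f := fun j => rgsOf P j + 1) (Finset.mem_Iio.mpr hri))

lemma parts_eq_image_part : P.parts = Finset.univ.image P.part := by
  ext t
  simp only [Finset.mem_image, Finset.mem_univ, true_and]
  constructor
  · intro ht
    obtain ⟨a, ha⟩ := P.nonempty_of_mem_parts ht
    exact ⟨a, P.part_eq_of_mem ht ha⟩
  · rintro ⟨a, rfl⟩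
    exact P.part_mem.mpr (Finset.mem_univ a)

lemma rgsOf_injective {Q : Finpartition (Finset.univ : Finset (Fin n))}
    (h : rgsOf P = rgsOf Q) : P = Q := by
  have hrel : ∀ i j : Fin n, P.part i = P.part j ↔ Q.part i = Q.part j := by
    intro i j
    rw [← prep_eq_iff, ← rgsOf_eq_iff, h, rgsOf_eq_iff, prep_eq_iff]
  have hpart : P.part = Q.part := by
    funext i
    have h1 : P.part i = Finset.univ.filter (fun j => P.part j = P.part i) := by
      ext j
      simp only [Finset.mem_filter, Finset.mem_univ, true_and]
      exact P.mem_part_iff_part_eq_part (Finset.mem_univ j) (Finset.mem_univ i)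
    have h2 : Q.part i = Finset.univ.filter (fun j => Q.part j = Q.part i) := by
      ext j
      simp only [Finset.mem_filter, Finset.mem_univ, true_and]
      exact Q.mem_part_iff_part_eq_part (Finset.mem_univ j) (Finset.mem_univ i)
    rw [h1, h2]
    exact Finset.filter_congr fun j _ => hrel j i
  ext1
  rw [parts_eq_image_part, parts_eq_image_part, hpart]

end Aux2

/-- the finpartition induced by a function into ℕ -/
def toPartition {n : ℕ} (a : Fin n → ℕ) : Finpartition (Finset.univ : Finset (Fin n)) :=
  letI : DecidableRel (Setoid.ker a).r := fun x y => Nat.decEq (a x) (a y)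
  Finpartition.ofSetoid (Setoid.ker a)

lemma mem_part_toPartition {n : ℕ} (a : Fin n → ℕ) (i j : Fin n) :
    j ∈ (toPartition a).part i ↔ a i = a j := by
  letI : DecidableRel (Setoid.ker a).r := fun x y => Nat.decEq (a x) (a y)
  unfold toPartition
  exact Finpartition.mem_part_ofSetoid_iff_rel

theorem card_rgs_eq_card_finpartition (n : ℕ) :
    Fintype.card {a : Fin n → ℕ // ∀ i, a i ≤ (Finset.Iio i).sup (fun j => a j + 1)} =
      Fintype.card (Finpartition (Finset.univ : Finset (Fin n))) := by
  apply le_antisymm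
  · apply Fintype.card_le_of_injective (fun a => toPartition a.1)
    rintro ⟨a, ha⟩ ⟨b, hb⟩ h
    refine Subtype.ext (rgs_inj a b ha hb fun i j => ?_)
    simp only at h
    rw [← mem_part_toPartition a i j, ← mem_part_toPartition b i j, h]
  · apply Fintype.card_le_of_injective
      (fun P => (⟨rgsOf P, rgsOf_isRGS P⟩ :
        {a : Fin n → ℕ // ∀ i, a i ≤ (Finset.Iio i).sup (fun j => a j + 1)}))
    intro P Q h
    exact rgsOf_injective P (congrArg Subtype.val h)
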